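/- There exists a constant C > 0 such that for all d ≥ 1, the number of squarefree positive integers of weight d (i.e., products of exactly d distinct primes) not exceeding p_1 p_2 ⋯ p_{d+1} is O(C^d). -/

import Mathlib

/-- `π_d(x)`: the number of squarefree positive integers of weight `d`
(products of exactly `d` distinct primes) not exceeding `x : ℕ`. -/
def piWeight (d x : ℕ) : ℕ :=
  (((Finset.Icc 1 x)).filter fun m => Squarefree m ∧ m.primeFactors.card = d).card

/-- The primorialN `p_1 p_2 ⋯ p_m` (product of the first `m` primes),
with `Nat.nth Nat.Prime i` the `(i+1)`-st prime. -/
noncomputable def primorialN (m : ℕ) : ℕ := ∏ i ∈ Finset.range m, Nat.nth Nat.Prime i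

open Finset

namespace Stmt17Aux

noncomputable def pM (d : ℕ) : ℕ := Nat.nth Nat.Prime (d-1)

noncomputable def Gs (d : ℕ) : Finset (Finset ℕ) :=
  ((Finset.Icc 1 (primorialN (d+1))).powerset).filter
    (fun M => ∏ x ∈ M, (pM d + x) ≤ 2 * (pM d) ^ (M.card + 1))


/-- Chebyshev-type lower bound on the prime counting function. -/
lemma count_prime_lower (n : ℕ) (hn : 4 ≤ n) :
    2*n ≤ (Nat.count Nat.Prime (2*n+1) + 1) * (Nat.log 2 (2*n) + 1) := by
  classical
  set c := Nat.centralBinom n with hc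
  have hc0 : 0 < c := Nat.centralBinom_pos n
  have hn0 : 0 < 2*n := by omega
  -- each prime power factor of c is at most 2n
  have hppow : ∀ q : ℕ, q ^ c.factorization q ≤ 2*n := by
    intro q
    have : c = (2*n).choose n := rfl
    rw [this]
    exact Nat.pow_factorization_choose_le hn0
  -- prime factors of c are < 2n+1
  have hsub : c.primeFactors ⊆ (Finset.range (2*n+1)).filter Nat.Prime := by
    intro q hq
    have hqp : q.Prime := Nat.prime_of_mem_primeFactors hq
    have hdvd : q ∣ c := Nat.dvd_of_mem_primeFactors hq
    have hpos : 0 < c.factorization q := hqp.factorization_pos_of_dvd hc0.ne' hdvd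
    have hqle : q ≤ q ^ c.factorization q := Nat.le_self_pow hpos.ne' q
    have : q ≤ 2*n := hqle.trans (hppow q)
    simp only [Finset.mem_filter, Finset.mem_range]
    exact ⟨by omega, hqp⟩
  -- c ≤ (2n)^(number of prime factors)
  have hcle : c ≤ (2*n) ^ c.primeFactors.card := by
    have h1 : c = ∏ q ∈ c.primeFactors, q ^ c.factorization q := by
      conv_lhs => rw [← Nat.factorization_prod_pow_eq_self hc0.ne']
      rw [Finsupp.prod, Nat.support_factorization]
    calc c = ∏ q ∈ c.primeFactors, q ^ c.factorization q := h1
      _ ≤ ∏ _q ∈ c.primeFactors, 2*n := Finset.prod_le_prod' (fun q _ => hppow q)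
      _ = (2*n) ^ c.primeFactors.card := Finset.prod_const _
  have hcard : c.primeFactors.card ≤ Nat.count Nat.Prime (2*n+1) := by
    rw [Nat.count_eq_card_filter_range]
    exact Finset.card_le_card hsub
  set π := Nat.count Nat.Prime (2*n+1) with hπ
  have h4 : 4 ^ n < (2*n) ^ (π + 1) := by
    calc 4 ^ n < n * c := Nat.four_pow_lt_mul_centralBinom n hn
      _ ≤ (2*n) * (2*n) ^ π := by
          apply Nat.mul_le_mul (by omega)
          exact hcle.trans (Nat.pow_le_pow_right (by omega) hcard)
      _ = (2*n) ^ (π+1) := by rw [pow_succ, mul_comm]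
  set L := Nat.log 2 (2*n) + 1 with hL
  have h2n : 2*n < 2 ^ L := Nat.lt_pow_succ_log_self (by norm_num) _
  have : (2:ℕ) ^ (2*n) < 2 ^ (L * (π+1)) := by
    calc (2:ℕ) ^ (2*n) = 4 ^ n := by rw [(by norm_num : (4:ℕ) = 2^2), ← pow_mul]
      _ < (2*n) ^ (π+1) := h4
      _ ≤ (2^L) ^ (π+1) := Nat.pow_le_pow_left h2n.le _
      _ = 2 ^ (L * (π+1)) := by rw [← pow_mul]
  have := (Nat.pow_lt_pow_iff_right (by norm_num : 1 < 2)).1 this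
  calc 2*n ≤ L * (π+1) := by omega
    _ = (π+1) * L := mul_comm _ _

/-- Chebyshev upper bound on the n-th prime. -/
lemma nth_prime_le (d : ℕ) (hd : 1 ≤ d) :
    Nat.nth Nat.Prime d ≤ 2*(d+1)*(Nat.log 2 (d+1) + 3) := by
  classical
  set a := Nat.log 2 (d+1) with ha
  have ha1 : 1 ≤ a := by
    have : 2^1 ≤ d+1 := by omega
    exact (Nat.le_log_iff_pow_le (by norm_num) (by omega)).2 this
  set n := (d+1)*(a+3) with hn
  have hn4 : 4 ≤ n := by
    have : 2 ≤ d+1 := by omega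
    calc 4 = 2*2 := rfl
      _ ≤ (d+1)*(a+3) := Nat.mul_le_mul (by omega) (by omega)
  -- d+1 < 2^(a+1), a+3 ≤ 2^(a+1)
  have hd2 : d+1 < 2^(a+1) := Nat.lt_pow_succ_log_self (by norm_num) _
  have ha2 : a+3 ≤ 2^(a+1) := by
    have h1 : a < 2^a := Nat.lt_two_pow_self (n := a)
    have : 2^(a+1) = 2*2^a := by rw [pow_succ, mul_comm]
    omega
  have h2n : 2*n ≤ 2^(2*a+4) := by
    calc 2*n = 2*((d+1)*(a+3)) := rfl
      _ ≤ 2*(2^(a+1) * 2^(a+1)) := by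
          apply Nat.mul_le_mul_left
          exact Nat.mul_le_mul hd2.le ha2
      _ = 2^(2*a+3) := by rw [← pow_add]; ring_nf
      _ ≤ 2^(2*a+4) := Nat.pow_le_pow_right (by norm_num) (by omega)
  have hL : Nat.log 2 (2*n) + 1 ≤ 2*a+5 := by
    have := Nat.log_mono_right (b := 2) h2n
    rw [Nat.log_pow (by norm_num)] at this
    omega
  -- count of primes
  have hcount : d + 1 ≤ Nat.count Nat.Prime (2*n+1) := by
    by_contra hcon
    push_neg at hcon
    have h1 := count_prime_lower n hn4
    have h2 : (Nat.count Nat.Prime (2*n+1) + 1) * (Nat.log 2 (2*n) + 1) ≤ (d+1) * (2*a+5) := by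
      apply Nat.mul_le_mul (by omega) hL
    have h3 : (d+1) * (2*a+5) < 2*n := by
      have : 2*n = (d+1)*(2*a+6) := by rw [hn]; ring
      rw [this]
      exact Nat.mul_lt_mul_of_pos_left (by omega) (by omega)
    omega
  have : Nat.nth Nat.Prime d < 2*n+1 := Nat.nth_lt_of_lt_count (by omega)
  calc Nat.nth Nat.Prime d ≤ 2*n := by omega
    _ = 2*(d+1)*(a+3) := by rw [hn]; ring



lemma geom_le {r : ℝ} (h0 : 0 ≤ r) (h1 : r < 1) (n : ℕ) :
    ∑ i ∈ Finset.range n, r ^ i ≤ (1 - r)⁻¹ := by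
  have hr1 : (0:ℝ) < 1 - r := by linarith
  rw [inv_eq_one_div, le_div_iff₀ hr1]
  nlinarith [geom_sum_mul r n, pow_nonneg h0 n]

lemma lemC1 (p lam : ℕ) (hp : 1 ≤ p) (hl : 1 ≤ lam) :
    ∑ x ∈ Finset.Icc 1 p, ((p:ℝ)/(p+x))^lam ≤ 1 + 2*p/lam := by
  have hp0 : (0:ℝ) < p := by exact_mod_cast hp
  have hl0 : (0:ℝ) < lam := by exact_mod_cast hl
  set c : ℝ := lam/(2*p) with hc
  have hc0 : 0 < c := by positivity
  set r : ℝ := Real.exp (-c) with hr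
  have hr0 : 0 < r := Real.exp_pos _
  have hr1 : r < 1 := by
    rw [hr, Real.exp_lt_one_iff]
    linarith
  have hterm : ∀ x ∈ Finset.Icc 1 p, ((p:ℝ)/(p+x))^lam ≤ r^x := by
    intro x hx
    rw [Finset.mem_Icc] at hx
    have hx1 : (1:ℝ) ≤ x := by exact_mod_cast hx.1
    have hxp : (x:ℝ) ≤ p := by exact_mod_cast hx.2
    have hpx : (0:ℝ) < p + x := by linarith
    have h1 : (p:ℝ)/(p+x) ≤ 1 - x/(2*p) := by
      rw [div_le_iff₀ hpx]
      have expand : (1 - (x:ℝ)/(2*p)) * (p+x) = p + x/2 - x*x/(2*p) := by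
        field_simp; ring
      rw [expand]
      have h5 : (x:ℝ)*x/(2*p) ≤ x/2 := by
        rw [div_le_div_iff₀ (by linarith) (by norm_num)]
        nlinarith
      linarith
    have h2 : 1 - (x:ℝ)/(2*p) ≤ Real.exp (-(x/(2*p))) := by
      have := Real.add_one_le_exp (-((x:ℝ)/(2*p)))
      linarith
    have h3 : ((p:ℝ)/(p+x))^lam ≤ (Real.exp (-((x:ℝ)/(2*p))))^lam :=
      pow_le_pow_left₀ (by positivity) (h1.trans h2) lam
    calc ((p:ℝ)/(p+x))^lam ≤ (Real.exp (-((x:ℝ)/(2*p))))^lam := h3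
      _ = r^x := by
          rw [hr, ← Real.exp_nat_mul, ← Real.exp_nat_mul]
          congr 1
          rw [hc]
          field_simp
  calc ∑ x ∈ Finset.Icc 1 p, ((p:ℝ)/(p+x))^lam ≤ ∑ x ∈ Finset.Icc 1 p, r^x :=
        Finset.sum_le_sum hterm
    _ ≤ ∑ x ∈ Finset.range (p+1), r^x := by
        apply Finset.sum_le_sum_of_subset_of_nonneg
        · intro x hx
          rw [Finset.mem_Icc] at hx
          rw [Finset.mem_range]
          omega
        · intro x _ _
          positivity
    _ ≤ (1-r)⁻¹ := geom_le hr0.le hr1 _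
    _ ≤ 1 + 2*p/lam := by
        have hec : 1 + c ≤ Real.exp c := by
          have := Real.add_one_le_exp c
          linarith
        have hrc : r ≤ 1/(1+c) := by
          rw [hr, Real.exp_neg, inv_eq_one_div]
          apply div_le_div_of_nonneg_left (by norm_num) (by linarith) hec
        have h1r : c/(1+c) ≤ 1 - r := by
          have : 1 - 1/(1+c) = c/(1+c) := by field_simp; ring
          linarith
        have hpos : (0:ℝ) < c/(1+c) := by positivity
        calc (1-r)⁻¹ ≤ (c/(1+c))⁻¹ := by
              apply inv_anti₀ hpos h1r
          _ = (1+c)/c := by rw [inv_div]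
          _ = 1/c + 1 := by field_simp
          _ = 1 + 2*p/lam := by
              rw [hc]
              field_simp
              ring
  
lemma lemC2a (p : ℕ) (hp : 1 ≤ p) (P : ℕ) :
    ∑ x ∈ Finset.Icc 1 P, ((p:ℝ)/(p+x))^2 ≤ p := by
  have hp0 : (0:ℝ) < p := by exact_mod_cast hp
  have key : ∀ Q : ℕ, ∑ x ∈ Finset.Icc 1 Q, ((p:ℝ)/(p+x))^2 ≤ p - (p:ℝ)^2/(p+Q) := by
    intro Q
    induction Q with
    | zero =>
      simp only [Finset.Icc_self, Nat.cast_zero, add_zero]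
      rw [show Finset.Icc 1 0 = ∅ by rfl]
      simp only [Finset.sum_empty]
      have : (p:ℝ)^2/(p:ℝ) = p := by field_simp
      rw [this]
      simp
    | succ n ih =>
      rw [Finset.sum_Icc_succ_top (by omega)]
      have hn0 : (0:ℝ) ≤ n := by positivity
      have hterm : ((p:ℝ)/(p+(n+1:ℕ)))^2 ≤ (p:ℝ)^2/(p+n) - (p:ℝ)^2/(p+(n+1:ℕ)) := by
        push_cast
        have heq : (p:ℝ)^2/(p+n) - (p:ℝ)^2/(p+n+1) = (p:ℝ)^2/((p+n)*(p+n+1)) := by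
          field_simp
          ring
        rw [show (p:ℝ) + (n+1) = (p:ℝ) + n + 1 by ring, heq, div_pow]
        apply div_le_div_of_nonneg_left (by positivity) (by positivity)
        nlinarith
      push_cast at ih hterm ⊢
      linarith
  have h2 : (p:ℝ)^2/(p+P) ≥ 0 := by positivity
  linarith [key P]

lemma lemC2 (p k P : ℕ) (hp : 1 ≤ p) :
    ∑ x ∈ Finset.Icc (p+1) P, ((p:ℝ)/(p+x))^(k+2) ≤ (1/2:ℝ)^k * p := by
  have hp0 : (0:ℝ) < p := by exact_mod_cast hp
  have h1 : ∀ x ∈ Finset.Icc (p+1) P, ((p:ℝ)/(p+x))^(k+2) ≤ (1/2:ℝ)^k * ((p:ℝ)/(p+x))^2 := by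
    intro x hx
    rw [Finset.mem_Icc] at hx
    have hx1 : (p:ℝ)+1 ≤ x := by exact_mod_cast hx.1
    have hpx : (0:ℝ) < p + x := by linarith
    have hhalf : (p:ℝ)/(p+x) ≤ 1/2 := by
      rw [div_le_div_iff₀ hpx (by norm_num)]
      linarith
    rw [pow_add]
    apply mul_le_mul_of_nonneg_right _ (by positivity)
    exact pow_le_pow_left₀ (by positivity) hhalf k
  calc ∑ x ∈ Finset.Icc (p+1) P, ((p:ℝ)/(p+x))^(k+2)
      ≤ ∑ x ∈ Finset.Icc (p+1) P, (1/2:ℝ)^k * ((p:ℝ)/(p+x))^2 := Finset.sum_le_sum h1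
    _ = (1/2:ℝ)^k * ∑ x ∈ Finset.Icc (p+1) P, ((p:ℝ)/(p+x))^2 := by rw [← Finset.mul_sum]
    _ ≤ (1/2:ℝ)^k * ∑ x ∈ Finset.Icc 1 P, ((p:ℝ)/(p+x))^2 := by
        apply mul_le_mul_of_nonneg_left _ (by positivity)
        apply Finset.sum_le_sum_of_subset_of_nonneg
        · intro x hx
          rw [Finset.mem_Icc] at hx ⊢
          omega
        · intro x _ _
          positivity
    _ ≤ (1/2:ℝ)^k * p := by
        apply mul_le_mul_of_nonneg_left (lemC2a p hp P) (by positivity)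





lemma lemA (d : ℕ) (hd : 1 ≤ d) :
    piWeight d (primorialN (d+1)) ≤ 2^d * (Gs d).card := by
  classical
  set p := pM d with hp
  set P := primorialN (d+1) with hPdef
  have hinf := Nat.infinite_setOf_prime
  have hpprime : p.Prime := Nat.prime_nth_prime (d-1)
  have hpval : Nat.nth Nat.Prime (d-1) = p := rfl
  have hp2 : 2 ≤ p := hpprime.two_le
  set F : Finset ℕ := (Finset.range d).image (Nat.nth Nat.Prime) with hF
  have hFcard : F.card = d := by
    rw [hF, Finset.card_image_of_injective _ (Nat.nth_injective hinf), Finset.card_range]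
  have hFprime : ∀ q ∈ F, q.Prime := by
    intro q hq
    rw [hF, Finset.mem_image] at hq
    obtain ⟨i, _, rfl⟩ := hq
    exact Nat.prime_nth_prime i
  have hmemF : ∀ q, q.Prime → (q ∈ F ↔ q ≤ p) := by
    intro q hq
    constructor
    · intro hqF
      rw [hF, Finset.mem_image] at hqF
      obtain ⟨i, hi, rfl⟩ := hqF
      rw [Finset.mem_range] at hi
      exact (Nat.nth_le_nth hinf).2 (by omega)
    · intro hqle
      have h1 : Nat.nth Nat.Prime (Nat.count Nat.Prime q) = q := Nat.nth_count hq
      have h2 : Nat.count Nat.Prime q ≤ d - 1 := by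
        by_contra hcon
        push_neg at hcon
        have h3 := (Nat.nth_lt_nth hinf).2 hcon
        rw [h1] at h3
        rw [hpval] at h3
        omega
      rw [hF, Finset.mem_image]
      exact ⟨_, Finset.mem_range.2 (by omega), h1⟩
  have hprodF : ∏ q ∈ F, q = primorialN d := by
    rw [hF, Finset.prod_image (fun x _ y _ h => Nat.nth_injective hinf h)]
    rfl
  have hPsplit : P = (∏ q ∈ F, q) * Nat.nth Nat.Prime d := by
    rw [hprodF, hPdef]
    simp only [primorialN]
    exact Finset.prod_range_succ _ _
  -- Bertrand: p_{d+1} ≤ 2 p_d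
  have hbert : Nat.nth Nat.Prime d ≤ 2 * p := by
    obtain ⟨r, hr, hr1, hr2⟩ := Nat.exists_prime_lt_and_le_two_mul p (by omega)
    have h1 : Nat.nth Nat.Prime (Nat.count Nat.Prime r) = r := Nat.nth_count hr
    have hcount : d ≤ Nat.count Nat.Prime r := by
      by_contra hcon
      push_neg at hcon
      have h2 : Nat.count Nat.Prime r ≤ d - 1 := by omega
      have h3 := (Nat.nth_le_nth hinf).2 h2
      rw [h1, hpval] at h3
      omega
    calc Nat.nth Nat.Prime d ≤ Nat.nth Nat.Prime (Nat.count Nat.Prime r) :=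
          (Nat.nth_le_nth hinf).2 hcount
      _ = r := h1
      _ ≤ 2 * p := hr2
  -- the injection
  rw [piWeight]
  have key : ((Finset.Icc 1 P).filter fun m => Squarefree m ∧ m.primeFactors.card = d).card
      ≤ (F.powerset ×ˢ Gs d).card := by
    apply Finset.card_le_card_of_injOn
      (fun m => (m.primeFactors.filter (fun q => q ≤ p),
                 (m.primeFactors.filter (fun q => ¬ q ≤ p)).image (fun q => q - p)))
    · -- maps to
      intro m hm
      simp only [Finset.mem_coe, Finset.mem_filter, Finset.mem_Icc] at hm
      obtain ⟨⟨hm1, hmP⟩, hsq, hcard⟩ := hm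
      have hm0 : m ≠ 0 := by omega
      set A := m.primeFactors.filter (fun q => q ≤ p) with hA
      set T := m.primeFactors.filter (fun q => ¬ q ≤ p) with hT
      have hAF : A ⊆ F := by
        intro q hq
        rw [hA, Finset.mem_filter] at hq
        exact (hmemF q (Nat.prime_of_mem_primeFactors hq.1)).2 hq.2
      have hTdvd : ∀ q ∈ T, q ∣ m ∧ p < q := by
        intro q hq
        rw [hT, Finset.mem_filter] at hq
        exact ⟨Nat.dvd_of_mem_primeFactors hq.1, by omega⟩
      -- cardinalities
      have hcards : A.card + T.card = d := by
        rw [hA, hT, Finset.card_filter_add_card_filter_not, hcard]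
      -- main product inequality
      have hsplitm : (∏ q ∈ A, q) * (∏ q ∈ T, q) = m := by
        rw [hA, hT, Finset.prod_filter_mul_prod_filter_not]
        exact Nat.prod_primeFactors_of_squarefree hsq
      have hApos : 0 < ∏ q ∈ A, q := by
        apply Finset.prod_pos
        intro q hq
        exact (Nat.prime_of_mem_primeFactors (Finset.mem_of_mem_filter q hq)).pos
      have hTle : ∏ q ∈ T, q ≤ 2 * p ^ (T.card + 1) := by
        have h1 : (∏ q ∈ A, q) * (∏ q ∈ T, q) ≤
            (∏ q ∈ A, q) * ((∏ q ∈ F \ A, q) * (2 * p)) := by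
          rw [hsplitm]
          calc m ≤ P := hmP
            _ = (∏ q ∈ F, q) * Nat.nth Nat.Prime d := hPsplit
            _ = ((∏ q ∈ F \ A, q) * (∏ q ∈ A, q)) * Nat.nth Nat.Prime d := by
                rw [Finset.prod_sdiff hAF]
            _ ≤ ((∏ q ∈ F \ A, q) * (∏ q ∈ A, q)) * (2*p) := by
                apply Nat.mul_le_mul_left _ hbert
            _ = (∏ q ∈ A, q) * ((∏ q ∈ F \ A, q) * (2 * p)) := by ring
        have h2 : ∏ q ∈ T, q ≤ (∏ q ∈ F \ A, q) * (2 * p) :=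
          Nat.le_of_mul_le_mul_left h1 hApos
        have h3 : ∏ q ∈ F \ A, q ≤ p ^ (F \ A).card := by
          apply Finset.prod_le_pow_card
          intro q hq
          have hqF := Finset.mem_sdiff.1 hq |>.1
          exact (hmemF q (hFprime q hqF)).1 hqF
        have h4 : (F \ A).card = T.card := by
          rw [Finset.card_sdiff_of_subset hAF, hFcard]
          omega
        calc ∏ q ∈ T, q ≤ (∏ q ∈ F \ A, q) * (2*p) := h2
          _ ≤ p ^ (F \ A).card * (2*p) := Nat.mul_le_mul_right _ h3
          _ = p ^ T.card * (2*p) := by rw [h4]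
          _ = 2 * p ^ (T.card+1) := by ring
      -- membership
      rw [Finset.mem_coe, Finset.mem_product]
      constructor
      · exact Finset.mem_powerset.2 hAF
      · rw [Gs, Finset.mem_filter]
        have himinj : ∀ x ∈ T, ∀ y ∈ T, x - p = y - p → x = y := by
          intro x hx y hy hxy
          have h1 := (hTdvd x hx).2
          have h2 := (hTdvd y hy).2
          omega
        constructor
        · rw [Finset.mem_powerset]
          intro x hx
          rw [Finset.mem_image] at hx
          obtain ⟨q, hq, rfl⟩ := hx
          obtain ⟨hdvd, hlt⟩ := hTdvd q hq
          have hqm : q ≤ m := Nat.le_of_dvd (by omega) hdvd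
          rw [Finset.mem_Icc]
          omega
        · have hprodTM : ∏ x ∈ T.image (fun q => q - p), (pM d + x) = ∏ q ∈ T, q := by
            rw [Finset.prod_image himinj]
            apply Finset.prod_congr rfl
            intro q hq
            have := (hTdvd q hq).2
            rw [← hp]
            omega
          have hcardTM : (T.image (fun q => q - p)).card = T.card :=
            Finset.card_image_of_injOn himinj
          rw [hprodTM, hcardTM, ← hp]
          exact hTle
    · -- injectivity
      intro m1 h1 m2 h2 heq
      simp only [Finset.coe_filter, Set.mem_setOf_eq, Finset.mem_Icc] at h1 h2
      obtain ⟨⟨hm11, hm1P⟩, hsq1, hcard1⟩ := h1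
      obtain ⟨⟨hm21, hm2P⟩, hsq2, hcard2⟩ := h2
      rw [Prod.mk.injEq] at heq
      obtain ⟨heqA, heqM⟩ := heq
      have recover : ∀ m : ℕ, Squarefree m →
          ((m.primeFactors.filter (fun q => ¬ q ≤ p)).image (fun q => q - p)).image
            (fun x => x + p) = m.primeFactors.filter (fun q => ¬ q ≤ p) := by
        intro m _
        rw [Finset.image_image]
        have : ∀ q ∈ m.primeFactors.filter (fun q => ¬ q ≤ p),
            ((fun x => x + p) ∘ (fun q => q - p)) q = id q := by
          intro q hq
          rw [Finset.mem_filter] at hq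
          simp only [Function.comp_apply, id_eq]
          omega
        rw [Finset.image_congr this, Finset.image_id]
      have hT12 : m1.primeFactors.filter (fun q => ¬ q ≤ p)
          = m2.primeFactors.filter (fun q => ¬ q ≤ p) := by
        rw [← recover m1 hsq1, ← recover m2 hsq2, heqM]
      have hpf : m1.primeFactors = m2.primeFactors := by
        rw [← Finset.filter_union_filter_not_eq (p := fun q => q ≤ p) m1.primeFactors,
            ← Finset.filter_union_filter_not_eq (p := fun q => q ≤ p) m2.primeFactors,
            heqA, hT12]
      calc m1 = ∏ q ∈ m1.primeFactors, q := (Nat.prod_primeFactors_of_squarefree hsq1).symm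
        _ = ∏ q ∈ m2.primeFactors, q := by rw [hpf]
        _ = m2 := Nat.prod_primeFactors_of_squarefree hsq2
  calc ((Finset.Icc 1 P).filter fun m => Squarefree m ∧ m.primeFactors.card = d).card
      ≤ (F.powerset ×ˢ Gs d).card := key
    _ = 2^d * (Gs d).card := by
      rw [Finset.card_product, Finset.card_powerset, hFcard]






lemma lemB (d lam : ℕ) :
    ((Gs d).card : ℝ) ≤ (2 * pM d : ℝ)^lam *
      Real.exp (∑ x ∈ Finset.Icc 1 (primorialN (d+1)), ((pM d : ℝ)/(pM d + x))^lam) := by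
  classical
  set p := pM d with hpdef
  have hp2 : 2 ≤ p := (Nat.prime_nth_prime (d-1)).two_le
  have hp0 : (0:ℝ) < p := by exact_mod_cast (by omega : 0 < p)
  set s := Finset.Icc 1 (primorialN (d+1)) with hs
  set w : ℕ → ℝ := fun x => ((p:ℝ)/(p+x))^lam with hw
  have hw0 : ∀ x : ℕ, 0 ≤ w x := by
    intro x
    rw [hw]
    positivity
  have hstep1 : ∀ M ∈ Gs d, (1:ℝ) ≤ (2*(p:ℝ))^lam * ∏ x ∈ M, w x := by
    intro M hM
    rw [Gs, Finset.mem_filter] at hM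
    obtain ⟨hMs, hMprod⟩ := hM
    have hQpos : (0:ℝ) < ∏ x ∈ M, ((p:ℝ)+x) := by
      apply Finset.prod_pos
      intro x _
      positivity
    have hcast : ∏ x ∈ M, ((p:ℝ)+x) ≤ 2 * (p:ℝ)^(M.card+1) := by
      exact_mod_cast hMprod
    have hprodw : ∏ x ∈ M, w x = ((p:ℝ)^M.card / ∏ x ∈ M, ((p:ℝ)+x))^lam := by
      simp only [hw]
      rw [Finset.prod_pow, Finset.prod_div_distrib, Finset.prod_const]
    rw [hprodw]
    have hcomb : (2*(p:ℝ))^lam * ((p:ℝ)^M.card / ∏ x ∈ M, ((p:ℝ)+x))^lam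
        = ((2 * (p:ℝ)^(M.card+1)) / ∏ x ∈ M, ((p:ℝ)+x))^lam := by
      rw [← mul_pow]
      congr 1
      field_simp
      ring
    rw [hcomb]
    have hge1 : (1:ℝ) ≤ (2 * (p:ℝ)^(M.card+1)) / ∏ x ∈ M, ((p:ℝ)+x) :=
      (one_le_div hQpos).2 hcast
    calc (1:ℝ) = 1^lam := (one_pow lam).symm
      _ ≤ _ := pow_le_pow_left₀ (by norm_num) hge1 lam
  have hGsub : Gs d ⊆ s.powerset := Finset.filter_subset _ _
  calc ((Gs d).card : ℝ) = ∑ _M ∈ Gs d, (1:ℝ) := by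
        rw [Finset.sum_const, nsmul_eq_mul, mul_one]
    _ ≤ ∑ M ∈ Gs d, (2*(p:ℝ))^lam * ∏ x ∈ M, w x := Finset.sum_le_sum hstep1
    _ ≤ ∑ M ∈ s.powerset, (2*(p:ℝ))^lam * ∏ x ∈ M, w x := by
        apply Finset.sum_le_sum_of_subset_of_nonneg hGsub
        intro M _ _
        exact mul_nonneg (by positivity) (Finset.prod_nonneg (fun x _ => hw0 x))
    _ = (2*(p:ℝ))^lam * ∑ M ∈ s.powerset, ∏ x ∈ M, w x := by rw [← Finset.mul_sum]
    _ ≤ (2*(p:ℝ))^lam * Real.exp (∑ x ∈ s, w x) := by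
        apply mul_le_mul_of_nonneg_left _ (by positivity)
        have hexp : ∑ M ∈ s.powerset, ∏ x ∈ M, w x = ∏ x ∈ s, (w x + 1) := by
          rw [Finset.prod_add]
          apply Finset.sum_congr rfl
          intro t _
          simp
        rw [hexp]
        calc ∏ x ∈ s, (w x + 1) ≤ ∏ x ∈ s, Real.exp (w x) := by
              apply Finset.prod_le_prod
              · intro x _
                have := hw0 x
                positivity
              · intro x _
                have := Real.add_one_le_exp (w x)
                linarith
          _ = Real.exp (∑ x ∈ s, w x) := (Real.exp_sum s w).symm
    _ = (2 * (p:ℝ))^lam * Real.exp (∑ x ∈ Finset.Icc 1 (primorialN (d+1)), ((p:ℝ)/(p+x))^lam) := rfl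
  










lemma aux_pow (a : ℕ) (ha : 14 ≤ a) : 49*a*a + 1 ≤ 2^a := by
  induction a with
  | zero => omega
  | succ n ih =>
    rcases Nat.lt_or_ge n 14 with h | h
    · interval_cases n <;> simp_all <;> norm_num
    · have h1 := ih h
      have h2 : 2^(n+1) = 2*2^n := by rw [pow_succ]; ring
      nlinarith

lemma main_large (d : ℕ) (hd : 16383 ≤ d) :
    (piWeight d (primorialN (d+1)) : ℝ) ≤ Real.exp 2 * (8 * Real.exp 3)^d := by
  classical
  have hd1 : 1 ≤ d := by omega
  set a := Nat.log 2 (d+1) with ha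
  have ha14 : 14 ≤ a := by
    have h0 : (2:ℕ)^14 = 16384 := by norm_num
    exact (Nat.le_log_iff_pow_le (by norm_num) (by omega)).2 (by omega)
  have h2a : 2^a ≤ d+1 := Nat.pow_log_le_self 2 (by omega)
  have h49 : 49*a*a ≤ d := by
    have := aux_pow a ha14
    omega
  set p := pM d with hp
  have hpprime : Nat.Prime p := Nat.prime_nth_prime _
  have hp2 : 2 ≤ p := hpprime.two_le
  have hpB : p ≤ 2*(d+1)*(a+3) := by
    have h2 := nth_prime_le (d-1) (by omega)
    have h2' : pM d ≤ 2*(d-1+1)*(Nat.log 2 (d-1+1)+3) := by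
      rw [pM]
      exact h2
    have h3 : Nat.log 2 (d-1+1) ≤ a := Nat.log_mono_right (by omega)
    calc p ≤ 2*(d-1+1)*(Nat.log 2 (d-1+1)+3) := h2'
      _ ≤ 2*(d+1)*(a+3) := Nat.mul_le_mul (by omega) (by omega)
  set L := Nat.log 2 (2*p) + 1 with hL
  have h2p : 2*p < 2^L := Nat.lt_pow_succ_log_self (by norm_num) _
  have hL7a : L ≤ 7*a := by
    have hd2 : d+1 < 2^(a+1) := Nat.lt_pow_succ_log_self (by norm_num) _
    have ha3 : a+3 ≤ 2^(a+1) := by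
      have h1 : a < 2^a := Nat.lt_two_pow_self (n := a)
      have h2 : 2^(a+1) = 2*2^a := by rw [pow_succ]; ring
      omega
    have h2pB : 2*p ≤ 2^(2*a+4) := by
      calc 2*p ≤ 2*(2*(d+1)*(a+3)) := by omega
        _ = 4*((d+1)*(a+3)) := by ring
        _ ≤ 4*(2^(a+1) * 2^(a+1)) := by
            apply Nat.mul_le_mul_left
            exact Nat.mul_le_mul hd2.le ha3
        _ = 2^(2*a+4) := by rw [← pow_add]; ring_nf
    have h5 := Nat.log_mono_right (b := 2) h2pB
    rw [Nat.log_pow (by norm_num)] at h5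
    omega
  have hL1 : 1 ≤ L := by omega
  have hLL : L*L ≤ d := by
    calc L*L ≤ (7*a)*(7*a) := Nat.mul_le_mul hL7a hL7a
      _ = 49*a*a := by ring
      _ ≤ d := h49
  set k := d / L with hk
  set lam := k + 2 with hlam
  have hdm := Nat.div_add_mod d L
  have hdmod : d % L < L := Nat.mod_lt _ (by omega)
  have hkL : k*L ≤ d := Nat.div_mul_le_self d L
  have hkge : L - 1 ≤ k := by
    rw [hk, Nat.le_div_iff_mul_le (by omega)]
    calc (L-1)*L ≤ L*L := Nat.mul_le_mul_right _ (by omega)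
      _ ≤ d := hLL
  have hp2k : p ≤ 2^k := by
    have h1 : 2^L = 2*2^(L-1) := by
      conv_lhs => rw [show L = (L-1)+1 by omega]
      rw [pow_succ]
      ring
    have h2 : p < 2^(L-1) := by omega
    calc p ≤ 2^(L-1) := h2.le
      _ ≤ 2^k := Nat.pow_le_pow_right (by norm_num) hkge
  have hlamL : lam * L ≤ 2*d := by
    have h2L : 2*L ≤ 14*a := by omega
    have h14a : 14*a ≤ d := by nlinarith
    have hsp : lam*L = k*L + 2*L := by ring
    omega
  have h2plam : (2*p)^lam ≤ 4^d := by
    calc (2*p)^lam ≤ (2^L)^lam := Nat.pow_le_pow_left h2p.le _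
      _ = 2^(L*lam) := by rw [← pow_mul]
      _ ≤ 2^(2*d) := Nat.pow_le_pow_right (by norm_num) (by rw [Nat.mul_comm]; exact hlamL)
      _ = 4^d := by rw [show (4:ℕ) = 2^2 by norm_num, ← pow_mul]
  -- sigma bound
  have hsig : ∑ x ∈ Finset.Icc 1 (primorialN (d+1)), ((p:ℝ)/(p+x))^lam
      ≤ 3*(d:ℝ)+2 := by
    set P := primorialN (d+1) with hP
    have hw0 : ∀ x : ℕ, (0:ℝ) ≤ ((p:ℝ)/(p+x))^lam := by
      intro x
      positivity
    have hdisj : Disjoint (Finset.Icc 1 p) (Finset.Icc (p+1) P) := by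
      rw [Finset.disjoint_left]
      intro x hx hx'
      rw [Finset.mem_Icc] at hx hx'
      omega
    have hsplit : ∑ x ∈ Finset.Icc 1 P, ((p:ℝ)/(p+x))^lam
        ≤ ∑ x ∈ Finset.Icc 1 p, ((p:ℝ)/(p+x))^lam
          + ∑ x ∈ Finset.Icc (p+1) P, ((p:ℝ)/(p+x))^lam := by
      rw [← Finset.sum_union hdisj]
      apply Finset.sum_le_sum_of_subset_of_nonneg
      · intro x hx
        rw [Finset.mem_Icc] at hx
        rw [Finset.mem_union, Finset.mem_Icc, Finset.mem_Icc]
        omega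
      · intro x _ _
        exact hw0 x
    have hsmall := lemC1 p lam (by omega) (by omega)
    have hbig : ∑ x ∈ Finset.Icc (p+1) P, ((p:ℝ)/(p+x))^lam ≤ (1/2:ℝ)^k * p := by
      rw [hlam]
      exact lemC2 p k P (by omega)
    -- 2p/lam ≤ 3d
    have hsmall2 : 2*(p:ℝ)/lam ≤ 3*d := by
      have hN : 2*p ≤ 3*d*lam := by
        have h1 : 2*p*L ≤ 3*(d*d) := by
          have c1 : 2*p*L ≤ 2*(2*(d+1)*(a+3))*(7*a) :=
            Nat.mul_le_mul (Nat.mul_le_mul_left _ hpB) hL7a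
          have c2 : 2*(2*(d+1)*(a+3))*(7*a) = 28*(a*(a+3)*(d+1)) := by ring
          have c3 : a*(a+3)*(d+1) ≤ (a*(2*a))*(2*d) := by
            apply Nat.mul_le_mul
            · exact Nat.mul_le_mul_left _ (by omega)
            · omega
          have c4 : 28*((a*(2*a))*(2*d)) = 112*(a*a)*d := by ring
          have c5 : 112*(a*a) ≤ 3*d := by nlinarith [h49]
          calc 2*p*L ≤ 28*(a*(a+3)*(d+1)) := c1.trans c2.le
            _ ≤ 28*((a*(2*a))*(2*d)) := Nat.mul_le_mul_left _ c3
            _ = 112*(a*a)*d := c4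
            _ ≤ (3*d)*d := Nat.mul_le_mul_right _ c5
            _ = 3*(d*d) := by ring
        have h2 : d*d ≤ d*(lam*L) := by
          apply Nat.mul_le_mul_left
          have h5 : L * k + d % L = d := hdm
          have hsp : lam*L = L*k + 2*L := by ring
          omega
        have h3 : 2*p*L ≤ (3*d*lam)*L := by
          calc 2*p*L ≤ 3*(d*d) := h1
            _ ≤ 3*(d*(lam*L)) := Nat.mul_le_mul_left _ h2
            _ = (3*d*lam)*L := by ring
        exact Nat.le_of_mul_le_mul_right h3 (by omega)
      have hlam0 : (0:ℝ) < lam := by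
        have : 0 < lam := by omega
        exact_mod_cast this
      rw [div_le_iff₀ hlam0]
      calc 2*(p:ℝ) ≤ 3*d*lam := by exact_mod_cast hN
        _ = 3*(d:ℝ)*lam := by ring
    have hbig2 : ((1:ℝ)/2)^k * p ≤ 1 := by
      have h1 : ((1:ℝ)/2)^k * p = (p:ℝ)/2^k := by
        rw [div_pow, one_pow]
        ring
      rw [h1, div_le_one (by positivity)]
      exact_mod_cast hp2k
    calc ∑ x ∈ Finset.Icc 1 P, ((p:ℝ)/(p+x))^lam
        ≤ (1 + 2*(p:ℝ)/lam) + (1/2:ℝ)^k * p := by linarith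
      _ ≤ (1 + 3*(d:ℝ)) + 1 := by linarith
      _ ≤ 3*(d:ℝ)+2 := by linarith
  -- put together
  have hA := lemA d hd1
  have hB := lemB d lam
  have hcast2plam : ((2*pM d : ℕ):ℝ)^lam ≤ (4:ℝ)^d := by
    exact_mod_cast h2plam
  calc (piWeight d (primorialN (d+1)) : ℝ)
      ≤ ((2^d * (Gs d).card : ℕ) : ℝ) := by exact_mod_cast hA
    _ = 2^d * ((Gs d).card : ℝ) := by push_cast; ring
    _ ≤ 2^d * ((2 * pM d : ℝ)^lam *
          Real.exp (∑ x ∈ Finset.Icc 1 (primorialN (d+1)), ((pM d : ℝ)/(pM d + x))^lam)) := by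
        apply mul_le_mul_of_nonneg_left hB (by positivity)
    _ ≤ 2^d * ((4:ℝ)^d * Real.exp (3*(d:ℝ)+2)) := by
        apply mul_le_mul_of_nonneg_left _ (by positivity)
        apply mul_le_mul
        · calc (2 * (pM d : ℝ))^lam = ((2*pM d : ℕ):ℝ)^lam := by push_cast; ring
            _ ≤ (4:ℝ)^d := hcast2plam
        · exact Real.exp_le_exp.2 hsig
        · positivity
        · positivity
    _ = Real.exp 2 * (8 * Real.exp 3)^d := by
        rw [mul_pow, show (3*(d:ℝ)+2) = 2 + d*3 by ring, Real.exp_add, Real.exp_nat_mul,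
          show (8:ℝ)^d = 2^d*4^d by rw [← mul_pow]; norm_num]
        ring


end Stmt17Aux

/-- `π_d(p_1 ⋯ p_{d+1}) = O(C^d)`: there are constants `C, K > 0` with
`π_d(p_1 ⋯ p_{d+1}) ≤ K · C^d` for all `d ≥ 1`. -/
theorem stmt17 :
    ∃ C : ℝ, 0 < C ∧ ∃ K : ℝ, 0 < K ∧
      ∀ d : ℕ, 1 ≤ d → (piWeight d (primorialN (d + 1)) : ℝ) ≤ K * C ^ d := by
  have hC1 : (1:ℝ) ≤ 8 * Real.exp 3 := by
    nlinarith [Real.add_one_le_exp (3:ℝ)]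
  refine ⟨8*Real.exp 3, by positivity, 
    Real.exp 2 + ∑ j ∈ Finset.range 16383, (piWeight j (primorialN (j+1)) : ℝ), ?_, ?_⟩
  · have h1 : (0:ℝ) ≤ ∑ j ∈ Finset.range 16383, (piWeight j (primorialN (j+1)) : ℝ) :=
      Finset.sum_nonneg (fun j _ => by positivity)
    have := Real.exp_pos 2
    linarith
  · intro d hd
    have hCd : (1:ℝ) ≤ (8*Real.exp 3)^d := one_le_pow₀ hC1
    have hsumnn : (0:ℝ) ≤ ∑ j ∈ Finset.range 16383, (piWeight j (primorialN (j+1)) : ℝ) :=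
      Finset.sum_nonneg (fun j _ => by positivity)
    have hK0 : (0:ℝ) < Real.exp 2 + ∑ j ∈ Finset.range 16383, (piWeight j (primorialN (j+1)) : ℝ) := by
      have := Real.exp_pos 2
      linarith
    rcases Nat.lt_or_ge d 16383 with hsmall | hlarge
    · have h1 : (piWeight d (primorialN (d+1)) : ℝ)
          ≤ ∑ j ∈ Finset.range 16383, (piWeight j (primorialN (j+1)) : ℝ) := by
        apply Finset.single_le_sum (f := fun j => (piWeight j (primorialN (j+1)) : ℝ))
          (fun j _ => Nat.cast_nonneg _) (Finset.mem_range.2 hsmall)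
      calc (piWeight d (primorialN (d+1)) : ℝ)
          ≤ Real.exp 2 + ∑ j ∈ Finset.range 16383, (piWeight j (primorialN (j+1)) : ℝ) := by
            have := Real.exp_pos 2
            linarith
        _ = (Real.exp 2 + ∑ j ∈ Finset.range 16383, (piWeight j (primorialN (j+1)) : ℝ)) * 1 :=
            (mul_one _).symm
        _ ≤ _ := mul_le_mul_of_nonneg_left hCd hK0.le
    · calc (piWeight d (primorialN (d+1)) : ℝ)
          ≤ Real.exp 2 * (8*Real.exp 3)^d := Stmt17Aux.main_large d hlarge
        _ ≤ (Real.exp 2 + ∑ j ∈ Finset.range 16383, (piWeight j (primorialN (j+1)) : ℝ))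
              * (8*Real.exp 3)^d := by
            apply mul_le_mul_of_nonneg_right (by linarith) (by positivity)
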